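/- Let u, u₁, u₂, z be words over {a,b}, let w₁ = u·b·u₁ and w₂ = u·a·u₂. Then m(w̄₁·a·z·b·w₂) < m(w̄₁·b·z̄·a·w₂). -/

import Mathlib

def A : Matrix (Fin 2) (Fin 2) ℤ := !![1,1;1,2]
def B : Matrix (Fin 2) (Fin 2) ℤ := !![2,1;1,1]
/-- matrix of a word: `false` is the letter `a`, `true` is the letter `b` -/
def Mw (w : List Bool) : Matrix (Fin 2) (Fin 2) ℤ :=
  (w.map (fun x => if x then B else A)).prod
/-- the m-value: the top-right entry -/
def mval (w : List Bool) : ℤ := Mw w 0 1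
def U : Matrix (Fin 2) (Fin 2) ℤ := !![0,-1;1,0]
def J : Matrix (Fin 2) (Fin 2) ℤ := !![0,1;1,0]
/-- reversal with letters exchanged -/
def Ebar (w : List Bool) : List Bool := (w.map (fun x => !x)).reverse
def pell : ℕ → ℕ
  | 0 => 0
  | 1 => 1
  | n+2 => 2 * pell (n+1) + pell n

open Matrix

lemma Mw_nil : Mw [] = 1 := rfl
lemma Mw_cons (x : Bool) (w : List Bool) :
    Mw (x :: w) = (if x then B else A) * Mw w := by
  simp [Mw]
lemma Mw_append (v w : List Bool) : Mw (v ++ w) = Mw v * Mw w := by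
  simp [Mw]
lemma At : Aᵀ = A := by decide
lemma Bt : Bᵀ = B := by decide
lemma Mw_reverse (w : List Bool) : Mw w.reverse = (Mw w)ᵀ := by
  induction w with
  | nil => simp [Mw]
  | cons x w ih =>
    rw [List.reverse_cons, Mw_append, ih, Mw_cons x w, Matrix.transpose_mul]
    congr 1
    cases x <;> simp [Mw, At, Bt]

lemma Mw_entries (w : List Bool) :
    1 ≤ Mw w 0 0 ∧ 0 ≤ Mw w 0 1 ∧ 0 ≤ Mw w 1 0 ∧ 1 ≤ Mw w 1 1 := by
  induction w with
  | nil => simp [Mw_nil, Matrix.one_apply]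
  | cons x w ih =>
    obtain ⟨h1, h2, h3, h4⟩ := ih
    rw [Mw_cons]
    cases x <;>
      refine ⟨?_, ?_, ?_, ?_⟩ <;>
      simp [A, B, Matrix.mul_apply, Fin.sum_univ_two] <;>
      linarith

lemma Mw_det (w : List Bool) :
    Mw w 0 0 * Mw w 1 1 - Mw w 0 1 * Mw w 1 0 = 1 := by
  have h : (Mw w).det = 1 := by
    induction w with
    | nil => simp [Mw_nil]
    | cons x w ih =>
      rw [Mw_cons, Matrix.det_mul, ih, mul_one]
      cases x <;> simp [A, B, Matrix.det_fin_two_of]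
  rw [Matrix.det_fin_two] at h
  linarith

lemma key (L Z R : Matrix (Fin 2) (Fin 2) ℤ) :
    (L * B * Zᵀ * A * R) 0 1 - (L * A * Z * B * R) 0 1 =
    (Z 0 0 + Z 1 1 + 3 * Z 1 0) * (L 0 0 * R 1 1 - L 0 1 * R 0 1) := by
  simp [Matrix.mul_apply, Matrix.transpose_apply, Fin.sum_univ_two, A, B]
  ring

theorem stmt13 (u u₁ u₂ z : List Bool) :
    mval ((u ++ [true] ++ u₁).reverse ++ [false] ++ z ++ [true] ++ (u ++ [false] ++ u₂)) <
    mval ((u ++ [true] ++ u₁).reverse ++ [true] ++ z.reverse ++ [false] ++ (u ++ [false] ++ u₂)) := by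
  have hA : Mw [false] = A := by simp [Mw]
  have hB : Mw [true] = B := by simp [Mw]
  set C := Mw u with hC
  set X := Mw u₁ with hX
  set Y := Mw u₂ with hY
  set Z := Mw z with hZ
  set L : Matrix (Fin 2) (Fin 2) ℤ := Xᵀ * B * Cᵀ with hL
  set R : Matrix (Fin 2) (Fin 2) ℤ := C * A * Y with hR
  have h1 : Mw ((u ++ [true] ++ u₁).reverse ++ [false] ++ z ++ [true] ++ (u ++ [false] ++ u₂))
      = L * A * Z * B * R := by
    simp [hL, hR, Mw_append, Mw_cons, Mw_reverse, hA, hB, Bt, Matrix.transpose_mul,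
      Matrix.mul_assoc]
    rfl
  have h2 : Mw ((u ++ [true] ++ u₁).reverse ++ [true] ++ z.reverse ++ [false] ++ (u ++ [false] ++ u₂))
      = L * B * Zᵀ * A * R := by
    simp [hL, hR, Mw_append, Mw_cons, Mw_reverse, hA, hB, Bt, Matrix.transpose_mul,
      Matrix.mul_assoc]
    rfl
  obtain ⟨hc1, hc2, hc3, hc4⟩ := Mw_entries u
  obtain ⟨hx1, hx2, hx3, hx4⟩ := Mw_entries u₁
  obtain ⟨hy1, hy2, hy3, hy4⟩ := Mw_entries u₂
  obtain ⟨hz1, hz2, hz3, hz4⟩ := Mw_entries z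
  have hdet := Mw_det u
  rw [← hC] at hc1 hc2 hc3 hc4 hdet
  rw [← hX] at hx1 hx2 hx3 hx4
  rw [← hY] at hy1 hy2 hy3 hy4
  rw [← hZ] at hz1 hz2 hz3 hz4
  have hk := key L Z R
  have hs : L 0 0 * R 1 1 - L 0 1 * R 0 1
      = (C 0 0 * C 1 1 - C 0 1 * C 1 0) *
        (X 0 0 * Y 0 1 + 3 * (X 0 0 * Y 1 1) + X 1 0 * Y 1 1) := by
    simp [hL, hR, Matrix.mul_apply, Matrix.transpose_apply, Fin.sum_univ_two, A, B]
    ring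
  rw [hdet, one_mul] at hs
  have hspos : 0 < L 0 0 * R 1 1 - L 0 1 * R 0 1 := by
    rw [hs]; nlinarith
  have htpos : 0 < Z 0 0 + Z 1 1 + 3 * Z 1 0 := by linarith
  show mval _ < mval _
  rw [mval, mval, h1, h2]
  nlinarith [mul_pos htpos hspos]
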